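/- Constructing sections via parametrised deformations: let p : E → B be a fibration, U, V ⊆ E ×_B E, s_U : U → E^{[0,1]}_B a continuous section of the evaluation map Π over U, and H = (h₁,h₂) : V × [0,1] → E × E a homotopy with H(v,0) = v, H(v,1) ∈ U, and such that for each v ∈ V the paths t ↦ h₁(v,t) and t ↦ h₂(v,t) lie in E^{[0,1]}_B (i.e. project to constant paths in B). Then the formula s_V(v)(τ) = h₁(v,3τ) for τ ∈ [0,1/3], s_V(v)(τ) = s_U(H(v,1))(3τ−1) for τ ∈ [1/3,2/3], s_V(v)(τ) = h₂(v,3−3τ) for τ ∈ [2/3,1], defines a continuous section s_V : V → E^{[0,1]}_B of Π over V. -/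

import Mathlib

open Set

/-- Constructing parametrised motion planning algorithms via parametrised
deformations (Remark 2.5 of the paper).  Paths are modeled as maps `ℝ → E`
considered on `[0,1]`; a section over a set `U ⊆ E ×_B E` is a family of such
paths, jointly continuous on `U × [0,1]`, joining the two endpoints and
projecting to a constant path in `B`. -/
theorem section_via_parametrised_deformation
    {E B : Type*} [TopologicalSpace E] [TopologicalSpace B]
    (p : E → B) (hp : Continuous p)
    (U V : Set (E × E))
    (hU : ∀ q ∈ U, p q.1 = p q.2) (hV : ∀ q ∈ V, p q.1 = p q.2)
    -- the continuous section `s_U` over `U`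
    (sU : E × E → ℝ → E)
    (hsUcont : ContinuousOn (fun z : (E × E) × ℝ => sU z.1 z.2) (U ×ˢ Icc 0 1))
    (hsU : ∀ q ∈ U, sU q 0 = q.1 ∧ sU q 1 = q.2 ∧
      ∀ t ∈ Icc (0 : ℝ) 1, p (sU q t) = p q.1)
    -- the parametrised deformation `H = (h₁, h₂)` of `V` into `U`
    (H : E × E → ℝ → E × E)
    (hHcont : ContinuousOn (fun z : (E × E) × ℝ => H z.1 z.2) (V ×ˢ Icc 0 1))
    (hH0 : ∀ v ∈ V, H v 0 = v)
    (hH1 : ∀ v ∈ V, H v 1 ∈ U)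
    (hH1const : ∀ v ∈ V, ∀ t ∈ Icc (0 : ℝ) 1, p (H v t).1 = p v.1)
    (hH2const : ∀ v ∈ V, ∀ t ∈ Icc (0 : ℝ) 1, p (H v t).2 = p v.2)
    -- the concatenated section `s_V` over `V`
    (sV : E × E → ℝ → E)
    (hsV : ∀ v τ, sV v τ =
      if τ ≤ 1 / 3 then (H v (3 * τ)).1
      else if τ ≤ 2 / 3 then sU (H v 1) (3 * τ - 1)
      else (H v (3 - 3 * τ)).2) :
    (∀ v ∈ V, sV v 0 = v.1 ∧ sV v 1 = v.2 ∧
      ∀ τ ∈ Icc (0 : ℝ) 1, p (sV v τ) = p v.1) ∧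
    ContinuousOn (fun z : (E × E) × ℝ => sV z.1 z.2) (V ×ˢ Icc 0 1) := by
  constructor
  · intro v hv
    refine ⟨?_, ?_, ?_⟩
    · rw [hsV]
      simp only [if_pos (by norm_num : (0:ℝ) ≤ 1/3), mul_zero, hH0 v hv]
    · rw [hsV]
      rw [if_neg (by norm_num), if_neg (by norm_num)]
      norm_num [hH0 v hv]
    · intro τ hτ
      rw [hsV]
      split_ifs with h1 h2
      · exact hH1const v hv (3 * τ) ⟨by linarith [hτ.1], by linarith⟩
      · have hU1 := hH1 v hv
        have := (hsU _ hU1).2.2 (3 * τ - 1) ⟨by linarith [not_le.mp h1], by linarith⟩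
        rw [this]
        exact hH1const v hv 1 ⟨by norm_num, le_refl 1⟩
      · have := hH2const v hv (3 - 3 * τ) ⟨by linarith [hτ.2], by linarith [not_le.mp h2]⟩
        rw [this, ← hV v hv]
  · -- Continuity. Define clamped pieces continuous on all of V ×ˢ Icc 0 1.
    set S := V ×ˢ Icc (0:ℝ) 1 with hS
    have h01 : ∀ z : (E × E) × ℝ, z ∈ S → z.1 ∈ V ∧ z.2 ∈ Icc (0:ℝ) 1 := by
      intro z hz; exact ⟨hz.1, hz.2⟩
    -- piece 1
    have CF1 : ContinuousOn (fun z : (E × E) × ℝ => (H z.1 (min 1 (3 * z.2))).1) S := by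
      have hin : Continuous (fun z : (E × E) × ℝ => (z.1, min 1 (3 * z.2))) := by fun_prop
      have hm : MapsTo (fun z : (E × E) × ℝ => (z.1, min 1 (3 * z.2))) S (V ×ˢ Icc 0 1) := by
        intro z hz
        refine ⟨hz.1, le_min (by norm_num) (by linarith [hz.2.1]), min_le_left _ _⟩
      exact continuous_fst.comp_continuousOn (hHcont.comp hin.continuousOn hm)
    -- the map v ↦ H v 1, continuous on S via first coordinate
    have CH1 : ContinuousOn (fun z : (E × E) × ℝ => H z.1 1) S := by
      have hin : Continuous (fun z : (E × E) × ℝ => (z.1, (1:ℝ))) := by fun_prop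
      have hm : MapsTo (fun z : (E × E) × ℝ => (z.1, (1:ℝ))) S (V ×ˢ Icc 0 1) := by
        intro z hz; exact ⟨hz.1, by norm_num⟩
      exact hHcont.comp hin.continuousOn hm
    -- piece 2
    have CF2 : ContinuousOn
        (fun z : (E × E) × ℝ => sU (H z.1 1) (min 1 (max 0 (3 * z.2 - 1)))) S := by
      have hin : ContinuousOn
          (fun z : (E × E) × ℝ => (H z.1 1, min 1 (max 0 (3 * z.2 - 1)))) S :=
        CH1.prodMk (by fun_prop)
      have hm : MapsTo (fun z : (E × E) × ℝ => (H z.1 1, min 1 (max 0 (3 * z.2 - 1)))) S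
          (U ×ˢ Icc 0 1) := by
        intro z hz
        exact ⟨hH1 z.1 hz.1, le_min (by norm_num) (le_max_left _ _), min_le_left _ _⟩
      exact hsUcont.comp hin hm
    -- piece 3
    have CF3 : ContinuousOn (fun z : (E × E) × ℝ => (H z.1 (min 1 (3 - 3 * z.2))).2) S := by
      have hin : Continuous (fun z : (E × E) × ℝ => (z.1, min 1 (3 - 3 * z.2))) := by fun_prop
      have hm : MapsTo (fun z : (E × E) × ℝ => (z.1, min 1 (3 - 3 * z.2))) S (V ×ˢ Icc 0 1) := by
        intro z hz
        refine ⟨hz.1, le_min (by norm_num) (by linarith [hz.2.2]), min_le_left _ _⟩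
      exact continuous_snd.comp_continuousOn (hHcont.comp hin.continuousOn hm)
    -- inner glued function (pieces 2 and 3)
    have frontier23 : frontier {z : (E × E) × ℝ | z.2 ≤ 2/3} ⊆ {z | z.2 = 2/3} :=
      frontier_le_subset_eq (by fun_prop) continuous_const
    have Cinner : ContinuousOn (fun z : (E × E) × ℝ =>
        if z.2 ≤ 2/3 then sU (H z.1 1) (min 1 (max 0 (3 * z.2 - 1)))
        else (H z.1 (min 1 (3 - 3 * z.2))).2) S := by
      apply ContinuousOn.if
      · rintro a ⟨ha, hfr⟩
        have h23 : a.2 = 2/3 := frontier23 hfr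
        have hU1 := hH1 a.1 ha.1
        have e1 : min 1 (max 0 (3 * a.2 - 1)) = 1 := by rw [h23]; norm_num
        have e2 : min 1 (3 - 3 * a.2) = 1 := by rw [h23]; norm_num
        rw [e1, e2, (hsU _ hU1).2.1]
      · exact CF2.mono inter_subset_left
      · exact CF3.mono inter_subset_left
    have frontier13 : frontier {z : (E × E) × ℝ | z.2 ≤ 1/3} ⊆ {z | z.2 = 1/3} :=
      frontier_le_subset_eq (by fun_prop) continuous_const
    have Cglue : ContinuousOn (fun z : (E × E) × ℝ =>
        if z.2 ≤ 1/3 then (H z.1 (min 1 (3 * z.2))).1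
        else if z.2 ≤ 2/3 then sU (H z.1 1) (min 1 (max 0 (3 * z.2 - 1)))
        else (H z.1 (min 1 (3 - 3 * z.2))).2) S := by
      apply ContinuousOn.if
      · rintro a ⟨ha, hfr⟩
        have h13 : a.2 = 1/3 := frontier13 hfr
        have hU1 := hH1 a.1 ha.1
        have e1 : min 1 (3 * a.2) = 1 := by rw [h13]; norm_num
        have e2 : min 1 (max 0 (3 * a.2 - 1)) = 0 := by rw [h13]; norm_num
        rw [e1, if_pos (by rw [h13]; norm_num : a.2 ≤ 2/3), e2, (hsU _ hU1).1]
      · exact CF1.mono inter_subset_left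
      · exact Cinner.mono inter_subset_left
    apply Cglue.congr
    intro z hz
    have hz2 := (h01 z hz).2
    simp only [hsV]
    split_ifs with h1 h2
    · have : min 1 (3 * z.2) = 3 * z.2 := min_eq_right (by linarith)
      rw [this]
    · have : min 1 (max 0 (3 * z.2 - 1)) = 3 * z.2 - 1 := by
        rw [max_eq_right (by linarith [not_le.mp h1]), min_eq_right (by linarith)]
      rw [this]
    · have : min 1 (3 - 3 * z.2) = 3 - 3 * z.2 := min_eq_right (by linarith [hz2.2])
      rw [this]
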